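/- With the hypotheses of the Beyn linearization (A_0 = VG, A_1 = VΛG, V of rank k, G of rank k, Λ diagonal, compact SVD A_0 = V_0Σ_0W_0^H), if (μ, y) is an eigenpair of B = V_0^H A_1 W_0 Σ_0^{-1}, then μ is a diagonal entry of Λ and x = V_0 y is a corresponding eigenvector in the column space of V, i.e., x = V c for some c with Λc = μc. -/
import Mathlib


open Matrix

/-- Eigenpairs of Beyn's reduced matrix `B = V₀ᴴ A₁ W₀ S₀⁻¹`: if `(μ, y)` is an eigenpair
of `B`, then `μ` is a diagonal entry of `Λ` and `x = V₀ y` lies in the column space of `V`,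
i.e. `x = V c` with `Λ c = μ c`. -/
theorem stmt4 {n m k : ℕ}
    (V : Matrix (Fin n) (Fin k) ℂ) (G : Matrix (Fin k) (Fin m) ℂ)
    (lam : Fin k → ℂ)
    (hVrank : V.rank = k) (hGrank : G.rank = k)
    (A0 A1 : Matrix (Fin n) (Fin m) ℂ)
    (hA0 : A0 = V * G) (hA1 : A1 = V * Matrix.diagonal lam * G)
    (V0 : Matrix (Fin n) (Fin k) ℂ) (W0 : Matrix (Fin m) (Fin k) ℂ)
    (S0 : Matrix (Fin k) (Fin k) ℂ) (sig : Fin k → ℂ)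
    (hS0 : S0 = Matrix.diagonal sig) (hS0unit : IsUnit S0.det)
    (hV0 : V0ᴴ * V0 = 1) (hW0 : W0ᴴ * W0 = 1)
    (hSVD : A0 = V0 * S0 * W0ᴴ)
    (B : Matrix (Fin k) (Fin k) ℂ) (hB : B = V0ᴴ * A1 * W0 * S0⁻¹)
    (μ : ℂ) (y : Fin k → ℂ) (hy : y ≠ 0) (heig : B.mulVec y = μ • y) :
    (∃ i : Fin k, lam i = μ) ∧
      ∃ c : Fin k → ℂ, V0.mulVec y = V.mulVec c ∧
        (Matrix.diagonal lam).mulVec c = μ • c := by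
  set P := V0ᴴ * V with hP
  set Q := G * W0 * S0⁻¹ with hQ
  have hVQ : V * Q = V0 := by
    calc V * Q = (V * G) * W0 * S0⁻¹ := by simp [hQ, Matrix.mul_assoc]
      _ = V0 * (S0 * ((W0ᴴ * W0) * S0⁻¹)) := by rw [← hA0, hSVD]; simp [Matrix.mul_assoc]
      _ = V0 := by rw [hW0, one_mul, Matrix.mul_nonsing_inv _ hS0unit, Matrix.mul_one]
  have hPQ : P * Q = 1 := by rw [hP, Matrix.mul_assoc, hVQ, hV0]
  have hQP : Q * P = 1 := mul_eq_one_comm.mp hPQ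
  have hBeq : B = P * Matrix.diagonal lam * Q := by
    rw [hB, hA1, hP, hQ]; simp [Matrix.mul_assoc]
  set c := Q.mulVec y with hc
  have hVc : V0.mulVec y = V.mulVec c := by
    rw [← hVQ, hc, Matrix.mulVec_mulVec]
  have hQB : Q * B = Matrix.diagonal lam * Q := by
    rw [hBeq, ← Matrix.mul_assoc Q (P * Matrix.diagonal lam) Q,
      ← Matrix.mul_assoc Q P (Matrix.diagonal lam), hQP, one_mul]
  have hlc : (Matrix.diagonal lam).mulVec c = μ • c := by
    rw [hc, Matrix.mulVec_mulVec, ← hQB, ← Matrix.mulVec_mulVec, heig,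
      Matrix.mulVec_smul]
  have hcne : c ≠ 0 := by
    intro h
    apply hy
    have : P.mulVec c = y := by
      rw [hc, Matrix.mulVec_mulVec, hPQ, Matrix.one_mulVec]
    rw [h, Matrix.mulVec_zero] at this
    exact this.symm
  refine ⟨?_, c, hVc, hlc⟩
  obtain ⟨i, hi⟩ := Function.ne_iff.mp hcne
  refine ⟨i, ?_⟩
  have := congrFun hlc i
  rw [Matrix.mulVec_diagonal] at this
  simpa using mul_right_cancel₀ hi (this.trans (by simp [mul_comm]))
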